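/- Let α ∈ ℝ and let u, w : ℝ → ℝ be differentiable functions satisfying u'(s) = 2u(s)w(s) + 2α and w'(s) = -(w(s)² - 2u(s) - s) for all s ∈ ℝ, and let H(s) = -u(s)² + (w(s)² - s)·u(s) + 2α·w(s). Then H is twice differentiable and satisfies the Jimbo–Miwa–Okamoto σ-form of the Painlevé II equation with γ = 2α: (H''(s))² + 4H'(s)·( (H'(s))² - s·H'(s) + H(s) ) - (2α)² = 0 for all s ∈ ℝ. -/

import Mathlib

/-- The Hamiltonian H of the rescaled Painlevé II Hamiltonian system satisfies the
Jimbo–Miwa–Okamoto σ-form with γ = 2α. -/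
theorem stmt_8 (α : ℝ) (u w : ℝ → ℝ)
    (hu : ∀ s : ℝ, HasDerivAt u (2 * u s * w s + 2 * α) s)
    (hw : ∀ s : ℝ, HasDerivAt w (-(w s ^ 2 - 2 * u s - s)) s)
    (H : ℝ → ℝ)
    (hH : ∀ s : ℝ, H s = -(u s) ^ 2 + (w s ^ 2 - s) * u s + 2 * α * w s) :
    (∀ s : ℝ, DifferentiableAt ℝ H s) ∧
    (∀ s : ℝ, DifferentiableAt ℝ (deriv H) s) ∧
    ∀ s : ℝ, (deriv (deriv H) s) ^ 2 +
      4 * deriv H s * ((deriv H s) ^ 2 - s * deriv H s + H s) - (2 * α) ^ 2 = 0 := by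
  have hHf : H = fun s => -(u s) ^ 2 + (w s ^ 2 - s) * u s + 2 * α * w s := funext hH
  have h1 : ∀ s : ℝ, HasDerivAt H (-(u s)) s := by
    intro s
    rw [hHf]
    have := (((hu s).pow 2).neg.add
        ((((hw s).pow 2).sub (hasDerivAt_id s)).mul (hu s))).add
        (((hasDerivAt_const s (2*α)).mul (hw s)))
    refine this.congr_deriv ?_
    simp only [Pi.sub_apply, Pi.pow_apply, id_eq, Nat.cast_ofNat]
    ring
  have hd1 : deriv H = fun s => -(u s) := funext fun s => (h1 s).deriv
  have h2 : ∀ s : ℝ, HasDerivAt (deriv H) (-(2 * u s * w s + 2 * α)) s := by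
    intro s; rw [hd1]; exact (hu s).neg
  refine ⟨fun s => (h1 s).differentiableAt, fun s => (h2 s).differentiableAt, fun s => ?_⟩
  rw [(h2 s).deriv, (h1 s).deriv, hH s]
  ring
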